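/- Let C be a category with all finite limits and colimits. Define W = {f : A ⟶ B | there exists some morphism B ⟶ A in C}, TCof = the class of split monomorphisms, Fib = TCof.rlp, and Cof = (W ∩ Fib).llp. Then (W, Cof, Fib) is a model structure on C (the generalized cocore model structure): W satisfies two-out-of-three, the pairs (TCof, Fib) and (Cof, W ∩ Fib) are weak factorization systems, and Cof ∩ W = TCof, i.e. the acyclic cofibrations are exactly the split monomorphisms. -/

import Mathlib

open CategoryTheory CategoryTheory.Limits

universe v u

section Preliminaries

variable {C : Type u} [Category.{v} C]

/-- The right lifting class of a class of morphisms. -/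
def MorphismPropertyRLP (S : MorphismProperty C) : MorphismProperty C :=
  fun _ _ g => ∀ ⦃A B : C⦄ (f : A ⟶ B), S f → HasLiftingProperty f g

/-- The left lifting class of a class of morphisms. -/
def MorphismPropertyLLP (S : MorphismProperty C) : MorphismProperty C :=
  fun _ _ f => ∀ ⦃X Y : C⦄ (g : X ⟶ Y), S g → HasLiftingProperty f g

/-- `(L, R)` is a weak factorization system. -/
structure IsWFS (L R : MorphismProperty C) : Prop where
  llp_eq : L = MorphismPropertyLLP R
  rlp_eq : R = MorphismPropertyRLP L
  factor : ∀ ⦃X Y : C⦄ (f : X ⟶ Y),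
    ∃ (Z : C) (l : X ⟶ Z) (r : Z ⟶ Y), L l ∧ R r ∧ l ≫ r = f

/-- The two-out-of-three property for a class of morphisms. -/
def TwoOfThree (W : MorphismProperty C) : Prop :=
  ∀ ⦃X Y Z : C⦄ (f : X ⟶ Y) (g : Y ⟶ Z),
    (W f → W g → W (f ≫ g)) ∧ (W f → W (f ≫ g) → W g) ∧ (W g → W (f ≫ g) → W f)

/-- `(W, Cof, Fib)` is a model structure. -/
structure IsModelStructure (W Cof Fib : MorphismProperty C) : Prop where
  twoOfThree : TwoOfThree W
  wfs₁ : IsWFS Cof (fun _ _ f => Fib f ∧ W f)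
  wfs₂ : IsWFS (fun _ _ f => Cof f ∧ W f) Fib

end Preliminaries


section Aux
variable {C : Type u} [Category.{v} C]


/-- `snd : X ⨯ Y ⟶ Y` has RLP against split monos. -/
lemma aux_snd_rlp [HasBinaryProducts C] (X Y : C) ⦃A B : C⦄ (i : A ⟶ B) (hi : IsSplitMono i) :
    HasLiftingProperty i (prod.snd : X ⨯ Y ⟶ Y) := by
  haveI := hi
  constructor
  intro u v sq
  refine ⟨⟨⟨prod.lift (retraction i ≫ u ≫ prod.fst) v, ?_, ?_⟩⟩⟩
  · apply Limits.prod.hom_ext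
    · simp [← Category.assoc, prod.lift_fst, prod.lift_snd, prod.lift_fst_assoc, prod.lift_snd_assoc]
    · simpa [prod.lift_fst, prod.lift_snd, prod.lift_fst_assoc, prod.lift_snd_assoc] using sq.w.symm
  · simp [prod.lift_fst, prod.lift_snd, prod.lift_fst_assoc, prod.lift_snd_assoc]

/-- Retract argument: lifting against `snd` makes a split mono. -/
lemma aux_split_of_lift [HasBinaryProducts C] {X Y : C} (f : X ⟶ Y)
    (h : HasLiftingProperty f (prod.snd : X ⨯ Y ⟶ Y)) : IsSplitMono f := by
  have sq : CommSq (prod.lift (𝟙 X) f) f (prod.snd : X ⨯ Y ⟶ Y) (𝟙 Y) := ⟨by simp [prod.lift_fst, prod.lift_snd, prod.lift_fst_assoc, prod.lift_snd_assoc]⟩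
  exact ⟨⟨⟨sq.lift ≫ prod.fst, by rw [← Category.assoc, sq.fac_left]; simp [prod.lift_fst, prod.lift_snd, prod.lift_fst_assoc, prod.lift_snd_assoc]⟩⟩⟩

/-- A fibration `g` admits a "transport" map `h : X ⨯ Y ⟶ X`. -/
lemma aux_transport [HasBinaryProducts C] {X Y : C} (g : X ⟶ Y)
    (hg : ∀ ⦃A B : C⦄ (i : A ⟶ B), IsSplitMono i → HasLiftingProperty i g) :
    ∃ h : X ⨯ Y ⟶ X, prod.lift (𝟙 X) g ≫ h = 𝟙 X ∧ h ≫ g = prod.snd := by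
  haveI := hg (prod.lift (𝟙 X) g) ⟨⟨⟨prod.fst, by simp [prod.lift_fst, prod.lift_snd, prod.lift_fst_assoc, prod.lift_snd_assoc]⟩⟩⟩
  have sq : CommSq (𝟙 X) (prod.lift (𝟙 X) g) g (prod.snd : X ⨯ Y ⟶ Y) := ⟨by simp [prod.lift_fst, prod.lift_snd, prod.lift_fst_assoc, prod.lift_snd_assoc]⟩
  exact ⟨sq.lift, sq.fac_left, sq.fac_right⟩

/-- A fibration with a backwards map is a split epi. -/
lemma aux_section [HasBinaryProducts C] {X Y : C} (g : X ⟶ Y)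
    (hg : ∀ ⦃A B : C⦄ (i : A ⟶ B), IsSplitMono i → HasLiftingProperty i g)
    (t : Y ⟶ X) : ∃ s : Y ⟶ X, s ≫ g = 𝟙 Y := by
  obtain ⟨h, h1, h2⟩ := aux_transport g hg
  exact ⟨prod.lift t (𝟙 Y) ≫ h, by rw [Category.assoc, h2]; simp [prod.lift_fst, prod.lift_snd, prod.lift_fst_assoc, prod.lift_snd_assoc]⟩

/-- The map from the initial object lifts against any split epi. -/
lemma aux_initial_llp [HasInitial C] {Y X' Y' : C} (g : X' ⟶ Y')
    (hs : ∃ s : Y' ⟶ X', s ≫ g = 𝟙 Y') :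
    HasLiftingProperty (initial.to Y) g := by
  obtain ⟨s, hsg⟩ := hs
  constructor
  intro u v sq
  refine ⟨⟨⟨v ≫ s, initial.hom_ext _ _, by rw [Category.assoc, hsg]; simp⟩⟩⟩

/-- The cofibration part of the (Cof, W ∩ Fib) factorization. -/
lemma aux_cof_lift [HasBinaryProducts C] [HasBinaryCoproducts C] {X Y : C} (f : X ⟶ Y)
    ⦃X' Y' : C⦄ (g : X' ⟶ Y')
    (hg : ∀ ⦃A B : C⦄ (i : A ⟶ B), IsSplitMono i → HasLiftingProperty i g)
    (t : Y' ⟶ X') :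
    HasLiftingProperty (prod.lift (coprod.inl : X ⟶ X ⨿ Y) f) g := by
  obtain ⟨h, h1, h2⟩ := aux_transport g hg
  obtain ⟨s, hsg⟩ := aux_section g hg t
  constructor
  intro u v sq
  set m : (X ⨿ Y) ⨯ Y ⟶ X' :=
    prod.fst ≫ coprod.desc u (prod.lift (coprod.inr) (𝟙 Y) ≫ v ≫ s) with hm
  have key : prod.lift (coprod.inl : X ⟶ X ⨿ Y) f ≫ prod.lift m v
      = u ≫ prod.lift (𝟙 X') g := by
    apply Limits.prod.hom_ext
    · simp [hm, prod.lift_fst, prod.lift_snd, prod.lift_fst_assoc, prod.lift_snd_assoc, coprod.inl_desc]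
    · simpa [prod.lift_fst, prod.lift_snd, prod.lift_fst_assoc, prod.lift_snd_assoc] using sq.w.symm
  refine ⟨⟨⟨prod.lift m v ≫ h, ?_, ?_⟩⟩⟩
  · rw [← Category.assoc, key, Category.assoc, h1, Category.comp_id]
  · rw [Category.assoc, h2, prod.lift_snd]

end Aux

/-- The generalized cocore model structure on a finitely bicomplete category `C`:
weak equivalences `W = {f : A ⟶ B | ∃ B ⟶ A}`, trivial cofibrations the split
monomorphisms, fibrations their right lifting class, cofibrations the left lifting
class of the acyclic fibrations.  `W` satisfies two-out-of-three, the pairs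
`(TCof, Fib)` and `(Cof, W ∩ Fib)` are weak factorization systems, and the acyclic
cofibrations are exactly the split monomorphisms. -/

theorem generalizedCocore_modelStructure
    {C : Type u} [Category.{v} C] [HasFiniteLimits C] [HasFiniteColimits C]
    (W TCof Cof Fib : MorphismProperty C)
    (hW : W = fun A B _ => Nonempty (B ⟶ A))
    (hTCof : TCof = fun _ _ f => IsSplitMono f)
    (hFib : Fib = MorphismPropertyRLP TCof)
    (hCof : Cof = MorphismPropertyLLP (fun _ _ f => W f ∧ Fib f)) :
    IsModelStructure W Cof Fib ∧
    TwoOfThree W ∧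
    IsWFS TCof Fib ∧
    IsWFS Cof (fun _ _ f => W f ∧ Fib f) ∧
    (fun _ _ f => Cof f ∧ W f : MorphismProperty C) = TCof := by
  subst hW hTCof hFib hCof
  -- notation
  set W : MorphismProperty C := fun A B _ => Nonempty (B ⟶ A) with hW
  set TCof : MorphismProperty C := fun _ _ f => IsSplitMono f with hTCof
  set Fib : MorphismProperty C := MorphismPropertyRLP TCof with hFib
  set Cof : MorphismProperty C := MorphismPropertyLLP (fun _ _ f => W f ∧ Fib f) with hCof
  have fibdef : ∀ ⦃X Y : C⦄ (g : X ⟶ Y), Fib g ↔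
      ∀ ⦃A B : C⦄ (i : A ⟶ B), IsSplitMono i → HasLiftingProperty i g := by
    intro X Y g; rfl
  -- two out of three
  have t23 : TwoOfThree W := by
    intro X Y Z f g
    refine ⟨?_, ?_, ?_⟩
    · rintro ⟨a⟩ ⟨b⟩; exact ⟨b ≫ a⟩
    · rintro ⟨a⟩ ⟨c⟩; exact ⟨c ≫ f⟩
    · rintro ⟨b⟩ ⟨c⟩; exact ⟨g ≫ c⟩
  -- split monos are cofibrations, and weak equivalences
  have tcof_cof : ∀ ⦃X Y : C⦄ (f : X ⟶ Y), IsSplitMono f → Cof f := by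
    intro X Y f hf X' Y' g' hg'
    exact hg'.2 f hf
  have tcof_w : ∀ ⦃X Y : C⦄ (f : X ⟶ Y), IsSplitMono f → W f := by
    intro X Y f hf
    haveI := hf
    exact ⟨retraction f⟩
  -- (TCof, Fib) is a WFS
  have wfsTF : IsWFS TCof Fib := by
    refine ⟨?_, rfl, ?_⟩
    · funext X Y f
      refine propext ⟨?_, ?_⟩
      · intro hf X' Y' g hg
        exact hg f hf
      · intro hf
        exact aux_split_of_lift f (hf _ (aux_snd_rlp X Y))
    · intro X Y f
      exact ⟨X ⨯ Y, prod.lift (𝟙 X) f, prod.snd, ⟨⟨⟨prod.fst, by simp [prod.lift_fst, prod.lift_snd, prod.lift_fst_assoc, prod.lift_snd_assoc]⟩⟩⟩,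
        aux_snd_rlp X Y, by simp [prod.lift_fst, prod.lift_snd, prod.lift_fst_assoc, prod.lift_snd_assoc]⟩
  -- W ∩ Fib consists of split epis
  have wfib_sec : ∀ ⦃X Y : C⦄ (g : X ⟶ Y), W g → Fib g → ∃ s : Y ⟶ X, s ≫ g = 𝟙 Y := by
    rintro X Y g ⟨t⟩ hg
    exact aux_section g hg t
  -- initial maps are cofibrations
  have init_cof : ∀ (Y : C), Cof (initial.to Y) := by
    intro Y X' Y' g hg
    exact aux_initial_llp g (wfib_sec g hg.1 hg.2)
  -- (Cof, W ∩ Fib) is a WFS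
  have wfsC : IsWFS Cof (fun _ _ f => W f ∧ Fib f) := by
    refine ⟨rfl, ?_, ?_⟩
    · funext X Y g
      refine propext ⟨?_, ?_⟩
      · rintro ⟨hw, hfib⟩ A B f hf
        exact hf g ⟨hw, hfib⟩
      · intro hg
        constructor
        · haveI := hg _ (init_cof Y)
          have sq : CommSq (initial.to X) (initial.to Y) g (𝟙 Y) :=
            ⟨initial.hom_ext _ _⟩
          exact ⟨sq.lift⟩
        · intro A B i hi
          exact hg i (tcof_cof i hi)
    · intro X Y f
      refine ⟨(X ⨿ Y) ⨯ Y, prod.lift coprod.inl f, prod.snd, ?_, ?_, by simp [prod.lift_fst, prod.lift_snd, prod.lift_fst_assoc, prod.lift_snd_assoc]⟩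
      · rintro X' Y' g ⟨⟨t⟩, hfib⟩
        exact aux_cof_lift f g hfib t
      · exact ⟨⟨prod.lift coprod.inr (𝟙 Y)⟩, aux_snd_rlp (X ⨿ Y) Y⟩
  -- acyclic cofibrations = split monos
  have heq : (fun _ _ f => Cof f ∧ W f : MorphismProperty C) = TCof := by
    funext X Y f
    refine propext ⟨?_, ?_⟩
    · rintro ⟨hc, ⟨t⟩⟩
      refine aux_split_of_lift f (hc prod.snd ⟨⟨prod.lift t (𝟙 Y)⟩, aux_snd_rlp X Y⟩)
    · intro hf
      exact ⟨tcof_cof f hf, tcof_w f hf⟩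
  have hcomm : (fun _ _ f => Fib f ∧ W f : MorphismProperty C)
      = (fun _ _ f => W f ∧ Fib f) := by
    funext X Y f; exact propext and_comm
  exact ⟨⟨t23, hcomm ▸ wfsC, heq ▸ wfsTF⟩, t23, wfsTF, wfsC, heq⟩
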